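/- Let E be the open unit disc in ℂ and let T be an open subset of the closed unit disc. Then the harmonic measure of T ∩ E relative to E, evaluated at 0, satisfies ω(0, T∩E, E) ≤ (1/2π) ∫₀^{2π} 1_{∂E \ T}(e^{iθ}) dθ, where ω(·, A, E) is defined as the upper semicontinuous regularization of the supremum of all subharmonic functions u on E with u ≤ 1 on E whose upper limits at points of A are ≤ 0. -/

import Mathlib

open Complex MeasureTheory Metric Set Filter Topology
open scoped Manifold

noncomputable section

/-- Circle sub-mean value property + upper semicontinuity on a set `U ⊆ ℂ` (subharmonicity). -/
def SubMeanOn (u : ℂ → ℝ) (U : Set ℂ) : Prop :=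
  UpperSemicontinuousOn u U ∧
  ∀ z ∈ U, ∀ r : ℝ, 0 < r → closedBall z r ⊆ U →
    u z ≤ (1 / (2 * Real.pi)) *
      ∫ θ in (0:ℝ)..(2 * Real.pi), u (z + r * Complex.exp (θ * Complex.I))

/-- Plurisubharmonicity on `D ⊆ E`, via subharmonicity along holomorphic discs. -/
def PSHOn {E : Type*} [NormedAddCommGroup E] [NormedSpace ℂ E]
    (u : E → ℝ) (D : Set E) : Prop :=
  UpperSemicontinuousOn u D ∧
  ∀ φ : ℂ → E, DifferentiableOn ℂ φ (ball 0 1) → MapsTo φ (ball (0:ℂ) 1) D →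
    SubMeanOn (u ∘ φ) (ball 0 1)

/-- Relative extremal function for `A ⊆ closure D`. -/
def pshSup {E : Type*} [NormedAddCommGroup E] [NormedSpace ℂ E]
    (D A : Set E) (z : E) : ℝ :=
  sSup {t : ℝ | ∃ u : E → ℝ, PSHOn u D ∧ (∀ w ∈ D, u w ≤ 1) ∧
    (∀ a ∈ A, (a ∈ D → u a ≤ 0) ∧ (a ∉ D → Filter.limsup u (𝓝[D] a) ≤ 0)) ∧ t = u z}

/-- The plurisubharmonic measure: usc regularization of `pshSup`, extended to `D ∪ A`. -/
def pshm {E : Type*} [NormedAddCommGroup E] [NormedSpace ℂ E]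
    (D A : Set E) (z : E) : ℝ :=
  Filter.limsup (pshSup D A) (𝓝[D] z)

/-- Relative extremal function with subharmonic (1-variable) competitors. -/
def shSup (D A : Set ℂ) (z : ℂ) : ℝ :=
  sSup {t : ℝ | ∃ u : ℂ → ℝ, SubMeanOn u D ∧ (∀ w ∈ D, u w ≤ 1) ∧
    (∀ a ∈ A, (a ∈ D → u a ≤ 0) ∧ (a ∉ D → Filter.limsup u (𝓝[D] a) ≤ 0)) ∧ t = u z}

/-- Harmonic measure of `A` relative to `D ⊆ ℂ`. -/
def hm (D A : Set ℂ) (z : ℂ) : ℝ :=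
  Filter.limsup (shSup D A) (𝓝[D] z)

/-- Plurisubharmonicity on a subset of a complex manifold. -/
def MPSHOn {E : Type*} [NormedAddCommGroup E] [NormedSpace ℂ E]
    {X : Type*} [TopologicalSpace X] [ChartedSpace E X]
    (u : X → ℝ) (D : Set X) : Prop :=
  UpperSemicontinuousOn u D ∧
  ∀ φ : ℂ → X, MDifferentiableOn 𝓘(ℂ, ℂ) 𝓘(ℂ, E) φ (ball 0 1) →
    MapsTo φ (ball (0:ℂ) 1) D → SubMeanOn (u ∘ φ) (ball 0 1)

/-- Relative extremal function on a complex manifold. -/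
def MpshSup {E : Type*} [NormedAddCommGroup E] [NormedSpace ℂ E]
    {X : Type*} [TopologicalSpace X] [ChartedSpace E X]
    (D A : Set X) (z : X) : ℝ :=
  sSup {t : ℝ | ∃ u : X → ℝ, MPSHOn (E := E) u D ∧ (∀ w ∈ D, u w ≤ 1) ∧
    (∀ a ∈ A, (a ∈ D → u a ≤ 0) ∧ (a ∉ D → Filter.limsup u (𝓝[D] a) ≤ 0)) ∧ t = u z}

/-- Plurisubharmonic measure on a complex manifold. -/
def Mpshm {E : Type*} [NormedAddCommGroup E] [NormedSpace ℂ E]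
    {X : Type*} [TopologicalSpace X] [ChartedSpace E X]
    (D A : Set X) (z : X) : ℝ :=
  Filter.limsup (MpshSup (E := E) D A) (𝓝[D] z)

/-- A holomorphic disc on a complex manifold `X`: a holomorphic map defined
(and holomorphic) on a ball of radius `ρ > 1`, i.e. extending past the closed unit disc. -/
def IsHoloDisc {E : Type*} [NormedAddCommGroup E] [NormedSpace ℂ E]
    {X : Type*} [TopologicalSpace X] [ChartedSpace E X]
    (φ : ℂ → X) : Prop :=
  ∃ ρ : ℝ, 1 < ρ ∧ MDifferentiableOn 𝓘(ℂ, ℂ) 𝓘(ℂ, E) φ (ball 0 ρ)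

/-- The Poisson functional of `u`. -/
def poisson {E : Type*} [NormedAddCommGroup E] [NormedSpace ℂ E]
    {X : Type*} [TopologicalSpace X] [ChartedSpace E X]
    (u : X → ℝ) (z : X) : ℝ :=
  sInf {t : ℝ | ∃ φ : ℂ → X, IsHoloDisc (E := E) φ ∧ φ 0 = z ∧
    t = (1 / (2 * Real.pi)) *
      ∫ θ in (0:ℝ)..(2 * Real.pi), u (φ (Complex.exp (θ * Complex.I)))}

/-- A graph-type topological hypersurface in `F × ℂ`. -/
def IsGraph {F : Type*} [NormedAddCommGroup F] [NormedSpace ℂ F]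
    (S : Set (F × ℂ)) : Prop :=
  ∃ (U : Set (F × ℝ)) (h : F × ℝ → ℝ), IsOpen U ∧ ContinuousOn h U ∧
    S = {p : F × ℂ | (p.1, p.2.re) ∈ U ∧ p.2.im = h (p.1, p.2.re)}

/-- A topological hypersurface in a complex manifold modelled on `F × ℂ`. -/
def IsTopHypersurface {F : Type*} [NormedAddCommGroup F] [NormedSpace ℂ F]
    {X : Type*} [TopologicalSpace X] [ChartedSpace (F × ℂ) X]
    (A : Set X) : Prop :=
  ∀ a ∈ A, ∃ φ : PartialHomeomorph X (F × ℂ), a ∈ φ.source ∧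
    IsGraph (φ '' (A ∩ φ.source))

/-- A point `a` is of type 1 with respect to `D`. -/
def IsType1 {X : Type*} [TopologicalSpace X] (D : Set X) (a : X) : Prop :=
  ∀ U ∈ 𝓝 a, ∃ V : Set X, IsOpen V ∧ a ∈ V ∧ V ⊆ U ∧ IsConnected (V ∩ D)


/-- Lemma: `ω(0, T ∩ E, E) ≤ (1/2π) ∫₀^{2π} 1_{∂E \ T}(e^{iθ}) dθ`
for any open subset `T` of the closed unit disc. -/
theorem stmt0 (T : Set ℂ)
    (hT : ∃ U : Set ℂ, IsOpen U ∧ T = U ∩ closedBall (0:ℂ) 1) :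
    hm (ball (0:ℂ) 1) (T ∩ ball (0:ℂ) 1) 0 ≤
      (1 / (2 * Real.pi)) * ∫ θ in (0:ℝ)..(2 * Real.pi),
        Set.indicator (sphere (0:ℂ) 1 \ T) (fun _ => (1:ℝ))
          (Complex.exp (θ * Complex.I)) := by
  obtain ⟨U, hU, rfl⟩ := hT
  have hpi : (0:ℝ) < 2 * Real.pi := by positivity
  set D : Set ℂ := ball (0:ℂ) 1 with hD
  set T : Set ℂ := U ∩ closedBall (0:ℂ) 1 with hT
  set K : Set ℂ := closedBall (0:ℂ) 1 \ U with hK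
  have henorm : ∀ θ : ℝ, ‖Complex.exp (θ * Complex.I)‖ = 1 := fun θ => by
    rw [Complex.norm_exp_ofReal_mul_I]
  set G : ℝ → ℝ → ℝ := fun δ θ =>
    Set.indicator ((fun θ : ℝ => Complex.exp (θ * Complex.I)) ⁻¹' Metric.cthickening δ K)
      (fun _ => (1:ℝ)) θ with hGdef
  set g : ℝ → ℝ := fun θ =>
    Set.indicator (sphere (0:ℂ) 1 \ T) (fun _ => (1:ℝ)) (Complex.exp (θ * Complex.I)) with hgdef
  have hms : ∀ δ : ℝ, MeasurableSet
      ((fun θ : ℝ => Complex.exp (θ * Complex.I)) ⁻¹' Metric.cthickening δ K) := by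
    intro δ
    refine (Metric.isClosed_cthickening).measurableSet.preimage ?_
    exact ((Complex.continuous_ofReal.mul continuous_const).cexp).measurable
  have hGint : ∀ δ : ℝ, IntervalIntegrable (G δ) volume 0 (2 * Real.pi) := by
    intro δ
    rw [intervalIntegrable_iff, uIoc_of_le hpi.le]
    exact ((integrableOn_const measure_Ioc_lt_top.ne)).indicator (hms δ)
  -- key pointwise bound
  have key : ∀ δ : ℝ, 0 < δ → δ ≤ 1 → ∀ z : ℂ, ‖z‖ < δ / 2 →
      shSup D (T ∩ D) z ≤ (1 / (2 * Real.pi)) * ∫ θ in (0:ℝ)..(2 * Real.pi), G δ θ := by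
    intro δ hδ0 hδ1 z hz
    have hzD : z ∈ D := by
      rw [hD, mem_ball, dist_zero_right]
      linarith
    set r : ℝ := 1 - δ / 2 with hr
    have hr0 : 0 < r := by rw [hr]; linarith
    have hball : closedBall z r ⊆ D := by
      intro w hw
      rw [mem_closedBall] at hw
      rw [hD, mem_ball]
      calc dist w 0 ≤ dist w z + dist z 0 := dist_triangle w z 0
        _ < r + δ / 2 := by
            rw [dist_zero_right]
            exact add_lt_add_of_le_of_lt hw hz
        _ = 1 := by rw [hr]; ring
    have hBnn : 0 ≤ (1 / (2 * Real.pi)) * ∫ θ in (0:ℝ)..(2 * Real.pi), G δ θ := by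
      refine mul_nonneg (by positivity) ?_
      refine intervalIntegral.integral_nonneg hpi.le fun x _ => ?_
      exact Set.indicator_nonneg (fun _ _ => zero_le_one) _
    refine Real.sSup_le ?_ hBnn
    rintro t ⟨u, ⟨husc, hsm⟩, hle1, hA, rfl⟩
    have hmem : ∀ θ : ℝ, z + (r:ℂ) * Complex.exp (θ * Complex.I) ∈ D := by
      intro θ
      refine hball ?_
      rw [mem_closedBall, dist_eq_norm, add_sub_cancel_left, norm_mul, henorm,
        Complex.norm_real, Real.norm_eq_abs, abs_of_pos hr0, mul_one]
    have hpt : ∀ θ : ℝ, u (z + (r:ℂ) * Complex.exp (θ * Complex.I)) ≤ G δ θ := by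
      intro θ
      by_cases hc : θ ∈ (fun θ : ℝ => Complex.exp (θ * Complex.I)) ⁻¹' Metric.cthickening δ K
      · have : G δ θ = 1 := Set.indicator_of_mem hc _
        rw [this]
        exact hle1 _ (hmem θ)
      · have hG0 : G δ θ = 0 := Set.indicator_of_notMem hc _
        rw [hG0]
        have hwT : z + (r:ℂ) * Complex.exp (θ * Complex.I) ∈ T := by
          by_contra hnT
          refine hc ?_
          refine Metric.mem_cthickening_of_dist_le (Complex.exp (θ * Complex.I))
            (z + (r:ℂ) * Complex.exp (θ * Complex.I)) δ K ⟨?_, ?_⟩ ?_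
          · exact ball_subset_closedBall (hmem θ)
          · intro hUm
            exact hnT ⟨hUm, ball_subset_closedBall (hmem θ)⟩
          · have h1 : Complex.exp (θ * Complex.I) -
                (z + (r:ℂ) * Complex.exp (θ * Complex.I)) =
                ((1 - r : ℝ) : ℂ) * Complex.exp (θ * Complex.I) - z := by
              push_cast
              ring
            rw [dist_eq_norm, h1]
            calc ‖((1 - r : ℝ) : ℂ) * Complex.exp (θ * Complex.I) - z‖
                ≤ ‖((1 - r : ℝ) : ℂ) * Complex.exp (θ * Complex.I)‖ + ‖z‖ := norm_sub_le _ _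
              _ = |1 - r| + ‖z‖ := by
                  rw [norm_mul, henorm, Complex.norm_real, Real.norm_eq_abs, mul_one]
              _ ≤ δ / 2 + δ / 2 := by
                  have : |1 - r| = δ / 2 := by
                    rw [hr, show (1:ℝ) - (1 - δ / 2) = δ / 2 by ring]
                    exact abs_of_nonneg (by linarith)
                  rw [this]
                  linarith
              _ = δ := by ring
        exact (hA _ ⟨hwT, hmem θ⟩).1 (hmem θ)
    have step1 := hsm z hzD r hr0 hball
    by_cases hInt : IntervalIntegrable
        (fun θ : ℝ => u (z + (r:ℂ) * Complex.exp (θ * Complex.I))) volume 0 (2 * Real.pi)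
    · refine step1.trans ?_
      refine mul_le_mul_of_nonneg_left ?_ (by positivity)
      exact intervalIntegral.integral_mono_on hpi.le hInt (hGint δ) fun x _ => hpt x
    · rw [intervalIntegral.integral_undef hInt, mul_zero] at step1
      exact step1.trans hBnn
  -- dominated convergence
  have hconv : Tendsto (fun n : ℕ => ∫ θ in Ioc (0:ℝ) (2 * Real.pi), G (1 / ((n:ℝ) + 1)) θ)
      atTop (𝓝 (∫ θ in Ioc (0:ℝ) (2 * Real.pi), g θ)) := by
    refine MeasureTheory.tendsto_integral_of_dominated_convergence (fun _ => (1:ℝ))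
      (fun n => ?_) (integrableOn_const measure_Ioc_lt_top.ne) (fun n => ?_) ?_
    · exact ((measurable_const.indicator (hms _)).aestronglyMeasurable)
    · filter_upwards with θ
      rw [Real.norm_eq_abs, _root_.abs_of_nonneg (Set.indicator_nonneg (fun _ _ => zero_le_one) _)]
      by_cases hmem3 : θ ∈ (fun θ : ℝ => Complex.exp (θ * Complex.I)) ⁻¹'
          Metric.cthickening (1 / ((n:ℝ) + 1)) K
      · rw [Set.indicator_of_mem hmem3]
      · rw [Set.indicator_of_notMem hmem3]
        norm_num
    · filter_upwards with θ
      by_cases hT' : Complex.exp (θ * Complex.I) ∈ T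
      · have hg0 : g θ = 0 := Set.indicator_of_notMem (fun h => h.2 hT') _
        rw [hgdef] at hg0 ⊢
        rw [hg0]
        obtain ⟨δ0, hδ0pos, hbsub⟩ := Metric.isOpen_iff.1 hU _ hT'.1
        have ht : Tendsto (fun n : ℕ => 1 / ((n:ℝ) + 1)) atTop (𝓝 0) :=
          tendsto_one_div_add_atTop_nhds_zero_nat
        have hev : ∀ᶠ n : ℕ in atTop, G (1 / ((n:ℝ) + 1)) θ = 0 := by
          filter_upwards [ht.eventually_lt_const hδ0pos] with n hn
          refine Set.indicator_of_notMem ?_ _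
          intro hcm
          have := Metric.cthickening_subset_thickening' hδ0pos hn K hcm
          obtain ⟨k, hkK, hkd⟩ := Metric.mem_thickening_iff.1 this
          exact hkK.2 (hbsub (by rwa [mem_ball, dist_comm]))
        exact Tendsto.congr' (hev.mono fun n hn => hn.symm) tendsto_const_nhds
      · have hsph : Complex.exp (θ * Complex.I) ∈ sphere (0:ℂ) 1 := by
          rw [mem_sphere, dist_zero_right]
          exact henorm θ
        have hmemdiff : Complex.exp (θ * Complex.I) ∈ sphere (0:ℂ) 1 \ T := ⟨hsph, hT'⟩
        have hg1 : g θ = 1 := Set.indicator_of_mem hmemdiff _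
        rw [hgdef] at hg1 ⊢
        rw [hg1]
        have hK' : Complex.exp (θ * Complex.I) ∈ K := by
          refine ⟨sphere_subset_closedBall hsph, fun hUm => hT' ⟨hUm, sphere_subset_closedBall hsph⟩⟩
        have : ∀ n : ℕ, G (1 / ((n:ℝ) + 1)) θ = 1 := by
          intro m
          have hmem2 : θ ∈ (fun θ : ℝ => Complex.exp (θ * Complex.I)) ⁻¹'
              Metric.cthickening (1 / ((m:ℝ) + 1)) K :=
            Metric.self_subset_cthickening K hK'
          exact Set.indicator_of_mem hmem2 _
        rw [funext this]
        exact tendsto_const_nhds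
  -- epsilon argument
  refine le_of_forall_pos_le_add fun ε hε => ?_
  have h2πε : (0:ℝ) < 2 * Real.pi * ε := by positivity
  obtain ⟨n, hn⟩ := (hconv.eventually_lt_const
    (lt_add_of_pos_right (∫ θ in Ioc (0:ℝ) (2 * Real.pi), g θ) h2πε)).exists
  set δ : ℝ := 1 / ((n:ℝ) + 1) with hδ
  have hδ0 : 0 < δ := by positivity
  have hδ1 : δ ≤ 1 := by
    rw [hδ, div_le_one (by positivity)]
    linarith [Nat.cast_nonneg (α := ℝ) n]
  have hnb : (𝓝[D] (0:ℂ)).NeBot := by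
    refine mem_closure_iff_nhdsWithin_neBot.1 (subset_closure ?_)
    rw [hD, mem_ball, dist_self]
    norm_num
  have h0le : ∀ᶠ z in 𝓝[D] (0:ℂ), (0:ℝ) ≤ shSup D (T ∩ D) z := by
    filter_upwards [self_mem_nhdsWithin] with z hzD
    refine le_csSup ⟨1, ?_⟩ ?_
    · rintro t ⟨u, hu, hle1, _, rfl⟩
      exact hle1 z hzD
    · refine ⟨fun _ => 0, ⟨upperSemicontinuousOn_const, fun w hw ρ hρ hb => by simp⟩,
        fun w _ => zero_le_one, fun a ha => ⟨fun _ => le_refl 0, fun h => absurd ha.2 h⟩, rfl⟩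
  have hcb : IsCoboundedUnder (· ≤ ·) (𝓝[D] (0:ℂ)) (shSup D (T ∩ D)) :=
    Filter.IsBoundedUnder.isCoboundedUnder_le ⟨0, h0le⟩
  have hEv : ∀ᶠ z in 𝓝[D] (0:ℂ), shSup D (T ∩ D) z ≤
      (1 / (2 * Real.pi)) * ∫ θ in (0:ℝ)..(2 * Real.pi), G δ θ := by
    have hmem' : ball (0:ℂ) (δ / 2) ∈ 𝓝[D] (0:ℂ) :=
      nhdsWithin_le_nhds (ball_mem_nhds _ (by positivity))
    filter_upwards [hmem'] with z hz
    refine key δ hδ0 hδ1 z ?_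
    rwa [mem_ball, dist_zero_right] at hz
  have hlim : hm D (T ∩ D) 0 ≤ (1 / (2 * Real.pi)) * ∫ θ in (0:ℝ)..(2 * Real.pi), G δ θ :=
    Filter.limsup_le_of_le hcb hEv
  refine hlim.trans ?_
  have hIoc1 : (∫ θ in (0:ℝ)..(2 * Real.pi), G δ θ) = ∫ θ in Ioc (0:ℝ) (2 * Real.pi), G δ θ :=
    intervalIntegral.integral_of_le hpi.le
  have hIoc2 : (∫ θ in (0:ℝ)..(2 * Real.pi), g θ) = ∫ θ in Ioc (0:ℝ) (2 * Real.pi), g θ :=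
    intervalIntegral.integral_of_le hpi.le
  have hπ : (2 * Real.pi) ≠ 0 := ne_of_gt hpi
  calc (1 / (2 * Real.pi)) * ∫ θ in (0:ℝ)..(2 * Real.pi), G δ θ
      ≤ (1 / (2 * Real.pi)) * ((∫ θ in Ioc (0:ℝ) (2 * Real.pi), g θ) + 2 * Real.pi * ε) := by
        refine mul_le_mul_of_nonneg_left ?_ (by positivity)
        rw [hIoc1]
        exact hn.le
    _ = (1 / (2 * Real.pi)) * (∫ θ in (0:ℝ)..(2 * Real.pi), g θ) + ε := by
        rw [hIoc2]
        field_simp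
    _ = (1 / (2 * Real.pi)) * (∫ θ in (0:ℝ)..(2 * Real.pi),
          Set.indicator (sphere (0:ℂ) 1 \ T) (fun _ => (1:ℝ)) (Complex.exp (θ * Complex.I))) + ε := rfl
end
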